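/- Let a and b be distinct points of ℝ² and let q > 0. Writing det(u, v) = u₁v₂ − u₂v₁, consider the set D = { p ∈ ℝ² | q·(‖b − a‖² + ‖p − b‖² + ‖p − a‖²) ≤ det(b − a, p − a)/2 }. Then either D is empty, or there exist a point c ∈ ℝ² with dist(c, a) = dist(c, b) and a radius ρ ≥ 0 such that D is the closed disk of radius ρ centered at c. In particular D is convex. -/

import Mathlib

private lemma normsq_two (x : EuclideanSpace ℝ (Fin 2)) :
    ‖x‖ ^ 2 = x 0 ^ 2 + x 1 ^ 2 := by
  rw [EuclideanSpace.norm_eq, Real.sq_sqrt (by positivity)]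
  simp [Fin.sum_univ_two, sq_abs]

theorem bank_smith_region (a b : EuclideanSpace ℝ (Fin 2)) (hab : a ≠ b)
    (q : ℝ) (hq : 0 < q) (D : Set (EuclideanSpace ℝ (Fin 2)))
    (hD : D = {p : EuclideanSpace ℝ (Fin 2) |
      q * (‖b - a‖ ^ 2 + ‖p - b‖ ^ 2 + ‖p - a‖ ^ 2) ≤
        ((b - a) 0 * (p - a) 1 - (b - a) 1 * (p - a) 0) / 2}) :
    (D = ∅ ∨ ∃ (c : EuclideanSpace ℝ (Fin 2)) (ρ : ℝ),
      dist c a = dist c b ∧ 0 ≤ ρ ∧ D = Metric.closedBall c ρ) ∧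
    Convex ℝ D := by
  set a0 := a 0; set a1 := a 1; set b0 := b 0; set b1 := b 1
  set c0 : ℝ := (a0 + b0) / 2 - (b1 - a1) / (8 * q) with hc0
  set c1 : ℝ := (a1 + b1) / 2 + (b0 - a0) / (8 * q) with hc1
  set c : EuclideanSpace ℝ (Fin 2) := !₂[c0, c1] with hc
  have hC0 : c 0 = c0 := rfl
  have hC1 : c 1 = c1 := rfl
  set r2 : ℝ := c0 ^ 2 + c1 ^ 2 -
      (q * (((b0 - a0) ^ 2 + (b1 - a1) ^ 2) + a0 ^ 2 + b0 ^ 2 + a1 ^ 2 + b1 ^ 2)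
        + ((b0 - a0) * a1 - (b1 - a1) * a0) / 2) / (2 * q) with hr2
  clear_value r2 c
  have h2q : (0 : ℝ) < 2 * q := by linarith
  have key : ∀ p : EuclideanSpace ℝ (Fin 2),
      (q * (‖b - a‖ ^ 2 + ‖p - b‖ ^ 2 + ‖p - a‖ ^ 2) ≤
        ((b - a) 0 * (p - a) 1 - (b - a) 1 * (p - a) 0) / 2) ↔ ‖p - c‖ ^ 2 ≤ r2 := by
    intro p
    rw [normsq_two, normsq_two, normsq_two, normsq_two]
    simp only [PiLp.sub_apply, hC0, hC1]
    have hident :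
        q * ((b 0 - a 0) ^ 2 + (b 1 - a 1) ^ 2 +
            ((p 0 - b 0) ^ 2 + (p 1 - b 1) ^ 2) + ((p 0 - a 0) ^ 2 + (p 1 - a 1) ^ 2))
          - ((b 0 - a 0) * (p 1 - a 1) - (b 1 - a 1) * (p 0 - a 0)) / 2
        = (2 * q) * (((p 0 - c0) ^ 2 + (p 1 - c1) ^ 2) - r2) := by
      rw [hr2, hc0, hc1]
      field_simp
      ring
    rw [← sub_nonpos, hident, ← sub_nonpos (b := r2)]
    constructor
    · intro h
      have h1 : (2 * q) * ((p 0 - c0) ^ 2 + (p 1 - c1) ^ 2 - r2) ≤ (2 * q) * 0 := by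
        rwa [mul_zero]
      exact le_of_mul_le_mul_left h1 h2q
    · intro h
      exact mul_nonpos_of_nonneg_of_nonpos (le_of_lt h2q) h
  have hDset : D = {p : EuclideanSpace ℝ (Fin 2) | ‖p - c‖ ^ 2 ≤ r2} := by
    rw [hD]; ext p; exact key p
  have hdistcab : dist c a = dist c b := by
    have hsq : dist c a ^ 2 = dist c b ^ 2 := by
      rw [dist_eq_norm, dist_eq_norm, normsq_two, normsq_two]
      simp only [PiLp.sub_apply, hC0, hC1, hc0, hc1]
      field_simp
      ring
    nlinarith [dist_nonneg (x := c) (y := a), dist_nonneg (x := c) (y := b)]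
  rcases lt_or_ge r2 0 with hneg | hpos
  · have hempty : D = ∅ := by
      rw [hDset]; ext p
      simp only [Set.mem_setOf_eq, Set.mem_empty_iff_false, iff_false, not_le]
      calc r2 < 0 := hneg
        _ ≤ ‖p - c‖ ^ 2 := by positivity
    constructor
    · exact Or.inl hempty
    · rw [hempty]; exact convex_empty
  · have hball : D = Metric.closedBall c (Real.sqrt r2) := by
      rw [hDset]; ext p
      simp only [Set.mem_setOf_eq, Metric.mem_closedBall, dist_eq_norm]
      rw [Real.le_sqrt (norm_nonneg _) hpos]
    constructor
    · exact Or.inr ⟨c, Real.sqrt r2, hdistcab, Real.sqrt_nonneg _, hball⟩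
    · rw [hball]; exact convex_closedBall c _
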